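/- For every basis element σ ∈ S, ∂σ lies in the F-linear span of S (no basis elements U^m σ' with m ≠ 0 occur in ∂σ). Equivalently, the F-subspace C_model := span_F(S) of C∞ is a subcomplex of (C∞, ∂). (This is Lemma 4.3 of the paper, which isolates the U⁰-part of the full knot Floer complex of the (n,1)-cable of the trefoil as a direct summand.) -/

import Mathlib

/-- The labels of the `F[U,U⁻¹]`-basis `S` of `CFK^∞(T_{2,3;n,1})`. -/
inductive Gen : Type
  | x (k : ℕ) | x' (k : ℕ) | y (k : ℕ) | y' (k : ℕ) | z (k : ℕ) | w (k : ℕ)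
  deriving DecidableEq

/-- The validity predicate carving out the basis set `S` for a given `n`:
`S = {y_n, x_n, y'_1} ∪ {x'_k, y'_k : 2 ≤ k ≤ n} ∪ {x_k, z_k : 2 ≤ k ≤ n−1} ∪ {y_k, w_k : 1 ≤ k ≤ n−1}`,
where we encode `x_n` as `.x n`, `y_n` as `.y n` and `y'_1` as `.y' 1`. -/
def Gen.Valid (n : ℕ) : Gen → Prop
  | .x k => 2 ≤ k ∧ k ≤ n
  | .x' k => 2 ≤ k ∧ k ≤ n
  | .y k => 1 ≤ k ∧ k ≤ n
  | .y' k => 1 ≤ k ∧ k ≤ n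
  | .z k => 2 ≤ k ∧ k ≤ n - 1
  | .w k => 1 ≤ k ∧ k ≤ n - 1

/-- The algebraic filtration `A₁` on `S`. -/
def Gen.A1 : Gen → ℤ
  | .x _ => 1
  | .x' k => (k : ℤ)
  | .y _ => 0
  | .y' k => (k : ℤ)
  | .z _ => 1
  | .w _ => 0

/-- The Alexander filtration `A₂` on `S`. -/
def Gen.A2 : Gen → ℤ
  | .x k => (k : ℤ)
  | .x' _ => 1
  | .y k => (k : ℤ)
  | .y' _ => 0
  | .z _ => 1
  | .w _ => 0

/-- The Maslov grading `M` on `S`. -/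
def Gen.M : Gen → ℤ
  | .x _ => 1
  | .x' _ => 1
  | .y _ => 0
  | .y' _ => 0
  | .z _ => 0
  | .w _ => -1

/-- The vertical differential `∂_V` on the basis `S`:
`∂_V x_n = y'_1`, `∂_V x_k = z_k` (`2 ≤ k ≤ n−1`), `∂_V x'_k = y'_k` (`2 ≤ k ≤ n`),
`∂_V y_k = w_k` (`1 ≤ k ≤ n−1`), and `∂_V σ = 0` otherwise. -/
def Gen.dV (n : ℕ) : Gen → Option Gen
  | .x k => if k = n then some (.y' 1) else some (.z k)
  | .x' k => some (.y' k)
  | .y k => if k = n then none else some (.w k)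
  | _ => none

/-- The basis set `S`. -/
abbrev SGen (n : ℕ) := {g : Gen // g.Valid n}

/-- `C^∞` as an `F = ℤ/2`-vector space with basis `{U^m σ : m ∈ ℤ, σ ∈ S}`;
the pair `(m, σ)` encodes the basis vector `U^m σ`, whose bifiltration is
`(A₁ σ − m, A₂ σ − m)` and whose Maslov grading is `M σ − 2m`.  (The value of a
finitely supported function at `(m, σ)` is the coefficient of `U^m σ`.) -/
abbrev Cinf (n : ℕ) := (ℤ × SGen n) →₀ ZMod 2

/-- The basis vector `U^m σ` of `C^∞`. -/
noncomputable def gen (n : ℕ) (m : ℤ) (σ : SGen n) : Cinf n :=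
  Finsupp.single (m, σ) 1

theorem statement_0 (n : ℕ) (hn : 2 ≤ n)
    (d : Cinf n →ₗ[ZMod 2] Cinf n)
    -- (i) ∂ ∘ ∂ = 0
    (hdd : ∀ v, d (d v) = 0)
    -- F[U,U⁻¹]-linearity: ∂ commutes with multiplication by U (the shift (m,σ) ↦ (m+1,σ))
    (hU : ∀ (m : ℤ) (σ : SGen n) (m' : ℤ) (σ' : SGen n),
      d (gen n m σ) (m', σ') = d (gen n (m + 1) σ) (m' + 1, σ'))
    -- (ii) ∂ is homogeneous of Maslov degree −1
    (hM : ∀ (m : ℤ) (σ : SGen n) (m' : ℤ) (σ' : SGen n),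
      d (gen n m σ) (m', σ') ≠ 0 → σ'.1.M - 2 * m' = σ.1.M - 2 * m - 1)
    -- (iii) ∂ strictly drops the bifiltration
    (hF : ∀ (m : ℤ) (σ : SGen n) (m' : ℤ) (σ' : SGen n),
      d (gen n m σ) (m', σ') ≠ 0 →
        σ'.1.A1 - m' ≤ σ.1.A1 - m ∧ σ'.1.A2 - m' ≤ σ.1.A2 - m ∧
          ¬(σ'.1.A1 - m' = σ.1.A1 - m ∧ σ'.1.A2 - m' = σ.1.A2 - m))
    -- (iv) the vertical components of ∂ (equal algebraic filtration) are exactly ∂_V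
    (hV : ∀ (σ : SGen n) (m' : ℤ) (σ' : SGen n),
      σ'.1.A1 - m' = σ.1.A1 →
        d (gen n 0 σ) (m', σ') = if σ.1.dV n = some σ'.1 ∧ m' = 0 then 1 else 0) :
    -- ∂ of every basis element of S lies in the F-linear span of S:
    -- no basis element U^{m'} σ' with m' ≠ 0 occurs in ∂σ
    ∀ (σ : SGen n) (m' : ℤ) (σ' : SGen n), m' ≠ 0 → d (gen n 0 σ) (m', σ') = 0 := by
  -- Maslov bounds
  have Mb : ∀ g : Gen, -1 ≤ g.M ∧ g.M ≤ 1 := by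
    intro g; cases g <;> constructor <;> norm_num [Gen.M]
  -- translation invariance
  have shift : ∀ (m : ℤ) (σ : SGen n) (m' : ℤ) (σ' : SGen n),
      d (gen n m σ) (m', σ') = d (gen n 0 σ) (m' - m, σ') := by
    intro m
    induction m using Int.induction_on with
    | zero => intro σ m' σ'; simp
    | succ i ih =>
      intro σ m' σ'
      have h := hU (i : ℤ) σ (m' - 1) σ'
      have e : m' - 1 + 1 = m' := by ring
      rw [e] at h
      rw [← h, ih σ (m' - 1) σ']
      have e2 : m' - 1 - (i : ℤ) = m' - ((i : ℤ) + 1) := by ring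
      rw [e2]
    | pred i ih =>
      intro σ m' σ'
      have h := hU (-(i : ℤ) - 1) σ m' σ'
      have e : -(i : ℤ) - 1 + 1 = -(i : ℤ) := by ring
      rw [e] at h
      rw [h, ih σ (m' + 1) σ']
      have e2 : m' + 1 - -(i : ℤ) = m' - (-(i : ℤ) - 1) := by ring
      rw [e2]
  have expand : ∀ (v : Cinf n) (q : ℤ × SGen n),
      d v q = ∑ p ∈ v.support, v p * d (gen n p.1 p.2) q := by
    intro v q
    conv_lhs => rw [← Finsupp.sum_single v]
    rw [Finsupp.sum, map_sum, Finsupp.finset_sum_apply]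
    apply Finset.sum_congr rfl
    intro p _
    have h1 : Finsupp.single p (v p) = (v p) • Finsupp.single p (1 : ZMod 2) := by
      rw [Finsupp.smul_single', mul_one]
    rw [h1, map_smul]
    have h2 : gen n p.1 p.2 = Finsupp.single p (1 : ZMod 2) := rfl
    rw [h2]
    simp
  -- ∂² = 0, coefficientwise
  have sq : ∀ (χ : SGen n) (a : ℤ) (b : SGen n),
      ∑ p ∈ (d (gen n 0 χ)).support,
        (d (gen n 0 χ)) p * d (gen n 0 p.2) (a - p.1, b) = 0 := by
    intro χ a b
    have h0 : d (d (gen n 0 χ)) (a, b) = 0 := by rw [hdd]; simp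
    rw [expand _ (a, b)] at h0
    rw [← h0]
    apply Finset.sum_congr rfl
    intro p _
    rw [shift p.1 p.2 a b]
  -- helper vanishing lemmas
  have hVz : ∀ (σ σ' : SGen n) (m' : ℤ), σ'.1.A1 - m' = σ.1.A1 → m' ≠ 0 →
      d (gen n 0 σ) (m', σ') = 0 := by
    intro σ σ' m' h hm
    rw [hV σ m' σ' h]
    simp [hm]
  have hFz : ∀ (σ σ' : SGen n) (m' : ℤ),
      (σ.1.A1 < σ'.1.A1 - m' ∨ σ.1.A2 < σ'.1.A2 - m') → d (gen n 0 σ) (m', σ') = 0 := by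
    intro σ σ' m' h
    by_contra hne
    obtain ⟨h1, h2, -⟩ := hF 0 σ m' σ' hne
    rcases h with h | h <;> omega
  have hMe : ∀ (σ σ' : SGen n) (m' : ℤ), d (gen n 0 σ) (m', σ') ≠ 0 →
      σ'.1.M - 2 * m' = σ.1.M - 1 := by
    intro σ σ' m' h
    have := hM 0 σ m' σ' h
    omega
  -- key lemma A : ∂ w_k has no U·y_1 component
  have keyA : ∀ (k : ℕ) (hk : (Gen.w k).Valid n) (h1 : (Gen.y 1).Valid n),
      d (gen n 0 ⟨.w k, hk⟩) (1, ⟨.y 1, h1⟩) = 0 := by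
    intro k hk h1
    have hkb : 1 ≤ k ∧ k ≤ n - 1 := hk
    have hkn : k ≠ n := by omega
    have hky : (Gen.y k).Valid n := ⟨hkb.1, by omega⟩
    set χ : SGen n := ⟨.y k, hky⟩ with hχ
    set τ : SGen n := ⟨.y 1, h1⟩ with hτ
    set p₀ : ℤ × SGen n := (0, ⟨.w k, hk⟩) with hp₀def
    have hc0 : d (gen n 0 χ) p₀ = 1 := by
      have h := hV χ 0 (⟨.w k, hk⟩ : SGen n) (by show (0:ℤ) - 0 = 0; norm_num)
      rw [hp₀def, h]
      simp [hχ, Gen.dV, hkn]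
    have hmem : p₀ ∈ (d (gen n 0 χ)).support :=
      Finsupp.mem_support_iff.2 (by rw [hc0]; exact one_ne_zero)
    have side : ∀ p ∈ (d (gen n 0 χ)).support, p ≠ p₀ →
        (d (gen n 0 χ)) p * d (gen n 0 p.2) (1 - p.1, τ) = 0 := by
      intro p _ hne
      by_contra hnz
      have hc1 := left_ne_zero_of_mul hnz
      have hc2 := right_ne_zero_of_mul hnz
      obtain ⟨m'', σ''⟩ := p
      obtain ⟨g, hg⟩ := σ''
      have hm0 : Gen.M g - 2 * m'' = 0 - 1 := hMe χ ⟨g, hg⟩ m'' hc1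
      cases g with
      | x l =>
        have h : (1:ℤ) - 2 * m'' = 0 - 1 := hm0
        have hm : m'' = 1 := by omega
        subst hm
        exact hc1 (hVz χ ⟨.x l, hg⟩ 1 (by show (1:ℤ) - 1 = 0; norm_num) one_ne_zero)
      | x' l =>
        have h : (1:ℤ) - 2 * m'' = 0 - 1 := hm0
        have hm : m'' = 1 := by omega
        subst hm
        refine hc1 (hFz χ ⟨.x' l, hg⟩ 1 (Or.inl ?_))
        show (0:ℤ) < (l : ℤ) - 1
        have := hg.1
        omega
      | y l => have h : (0:ℤ) - 2 * m'' = 0 - 1 := hm0; omega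
      | y' l => have h : (0:ℤ) - 2 * m'' = 0 - 1 := hm0; omega
      | z l => have h : (0:ℤ) - 2 * m'' = 0 - 1 := hm0; omega
      | w l =>
        have h : (-1:ℤ) - 2 * m'' = 0 - 1 := hm0
        have hm : m'' = 0 := by omega
        subst hm
        by_cases hlk : l = k
        · subst hlk; exact hne rfl
        · have h2 := hV χ 0 (⟨.w l, hg⟩ : SGen n) (by show (0:ℤ) - 0 = 0; norm_num)
          rw [h2] at hc1
          simp [hχ, Gen.dV, hkn] at hc1
          exact hlk hc1.symm
    have hsum := sq χ 1 τ
    have hterm := (Finset.sum_eq_single_of_mem p₀ hmem side).symm.trans hsum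
    have hterm2 : (d (gen n 0 χ)) p₀ * d (gen n 0 p₀.2) (1 - p₀.1, τ) = 0 := hterm
    rw [hc0, one_mul] at hterm2
    have hfin : d (gen n 0 (⟨Gen.w k, hk⟩ : SGen n)) ((1:ℤ) - 0, τ) = 0 := hterm2
    simpa using hfin
  -- key lemma B : ∂ z_k has no U·x_2 component
  have keyB : ∀ (k : ℕ) (hk : (Gen.z k).Valid n) (h2 : (Gen.x 2).Valid n),
      d (gen n 0 ⟨.z k, hk⟩) (1, ⟨.x 2, h2⟩) = 0 := by
    intro k hk h2
    have hkb : 2 ≤ k ∧ k ≤ n - 1 := hk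
    have hkn : k ≠ n := by omega
    have hkx : (Gen.x k).Valid n := ⟨hkb.1, by omega⟩
    set χ : SGen n := ⟨.x k, hkx⟩ with hχ
    set τ : SGen n := ⟨.x 2, h2⟩ with hτ
    set p₀ : ℤ × SGen n := (0, ⟨.z k, hk⟩) with hp₀def
    have hc0 : d (gen n 0 χ) p₀ = 1 := by
      have h := hV χ 0 (⟨.z k, hk⟩ : SGen n) (by show (1:ℤ) - 0 = 1; norm_num)
      rw [hp₀def, h]
      simp [hχ, Gen.dV, hkn]
    have hmem : p₀ ∈ (d (gen n 0 χ)).support :=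
      Finsupp.mem_support_iff.2 (by rw [hc0]; exact one_ne_zero)
    have side : ∀ p ∈ (d (gen n 0 χ)).support, p ≠ p₀ →
        (d (gen n 0 χ)) p * d (gen n 0 p.2) (1 - p.1, τ) = 0 := by
      intro p _ hne
      by_contra hnz
      have hc1 := left_ne_zero_of_mul hnz
      have hc2 := right_ne_zero_of_mul hnz
      obtain ⟨m'', σ''⟩ := p
      obtain ⟨g, hg⟩ := σ''
      have hm0 : Gen.M g - 2 * m'' = 1 - 1 := hMe χ ⟨g, hg⟩ m'' hc1
      cases g with
      | x l => have h : (1:ℤ) - 2 * m'' = 1 - 1 := hm0; omega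
      | x' l => have h : (1:ℤ) - 2 * m'' = 1 - 1 := hm0; omega
      | w l => have h : (-1:ℤ) - 2 * m'' = 1 - 1 := hm0; omega
      | y l =>
        have h : (0:ℤ) - 2 * m'' = 1 - 1 := hm0
        have hm : m'' = 0 := by omega
        subst hm
        rw [sub_zero] at hc2
        exact hc2 (hVz ⟨.y l, hg⟩ τ 1 (by show (1:ℤ) - 1 = 0; norm_num) one_ne_zero)
      | y' l =>
        have h : (0:ℤ) - 2 * m'' = 1 - 1 := hm0
        have hm : m'' = 0 := by omega
        subst hm
        rw [sub_zero] at hc2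
        refine hc2 (hFz ⟨.y' l, hg⟩ τ 1 (Or.inr ?_))
        show (0:ℤ) < ((2:ℕ) : ℤ) - 1
        norm_num
      | z l =>
        have h : (0:ℤ) - 2 * m'' = 1 - 1 := hm0
        have hm : m'' = 0 := by omega
        subst hm
        by_cases hlk : l = k
        · subst hlk; exact hne rfl
        · have h2' := hV χ 0 (⟨.z l, hg⟩ : SGen n) (by show (1:ℤ) - 0 = 1; norm_num)
          rw [h2'] at hc1
          simp [hχ, Gen.dV, hkn] at hc1
          exact hlk hc1.symm
    have hsum := sq χ 1 τ
    have hterm := (Finset.sum_eq_single_of_mem p₀ hmem side).symm.trans hsum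
    have hterm2 : (d (gen n 0 χ)) p₀ * d (gen n 0 p₀.2) (1 - p₀.1, τ) = 0 := hterm
    rw [hc0, one_mul] at hterm2
    have hfin : d (gen n 0 (⟨Gen.z k, hk⟩ : SGen n)) ((1:ℤ) - 0, τ) = 0 := hterm2
    simpa using hfin
  -- key lemma C : ∂ y'_k has no U·x'_j component
  have keyC : ∀ (k : ℕ), ∀ (hk : (Gen.y' k).Valid n) (j : ℕ) (hj : (Gen.x' j).Valid n),
      d (gen n 0 ⟨.y' k, hk⟩) (1, ⟨.x' j, hj⟩) = 0 := by
    intro k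
    induction k using Nat.strong_induction_on with
    | _ k ih =>
    intro hk j hj
    have hjb : 2 ≤ j ∧ j ≤ n := hj
    by_cases hk2 : k < 2
    · -- k = 1
      have hk1 : k = 1 := by have := hk.1; omega
      by_cases hj2 : j = 2
      · refine hVz ⟨.y' k, hk⟩ ⟨.x' j, hj⟩ 1 ?_ one_ne_zero
        show ((j:ℕ) : ℤ) - 1 = ((k:ℕ) : ℤ)
        omega
      · refine hFz ⟨.y' k, hk⟩ ⟨.x' j, hj⟩ 1 (Or.inl ?_)
        show ((k:ℕ) : ℤ) < ((j:ℕ) : ℤ) - 1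
        omega
    · push_neg at hk2
      have hkx : (Gen.x' k).Valid n := ⟨hk2, hk.2⟩
      set χ : SGen n := ⟨.x' k, hkx⟩ with hχ
      set τ : SGen n := ⟨.x' j, hj⟩ with hτ
      set p₀ : ℤ × SGen n := (0, ⟨.y' k, hk⟩) with hp₀def
      have hc0 : d (gen n 0 χ) p₀ = 1 := by
        have h := hV χ 0 (⟨.y' k, hk⟩ : SGen n) (by show ((k:ℕ):ℤ) - 0 = ((k:ℕ):ℤ); ring)
        rw [hp₀def, h]
        simp [hχ, Gen.dV]
      have hmem : p₀ ∈ (d (gen n 0 χ)).support :=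
        Finsupp.mem_support_iff.2 (by rw [hc0]; exact one_ne_zero)
      have side : ∀ p ∈ (d (gen n 0 χ)).support, p ≠ p₀ →
          (d (gen n 0 χ)) p * d (gen n 0 p.2) (1 - p.1, τ) = 0 := by
        intro p _ hne
        by_contra hnz
        have hc1 := left_ne_zero_of_mul hnz
        have hc2 := right_ne_zero_of_mul hnz
        obtain ⟨m'', σ''⟩ := p
        obtain ⟨g, hg⟩ := σ''
        have hm0 : Gen.M g - 2 * m'' = 1 - 1 := hMe χ ⟨g, hg⟩ m'' hc1
        cases g with
        | x l => have h : (1:ℤ) - 2 * m'' = 1 - 1 := hm0; omega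
        | x' l => have h : (1:ℤ) - 2 * m'' = 1 - 1 := hm0; omega
        | w l => have h : (-1:ℤ) - 2 * m'' = 1 - 1 := hm0; omega
        | y l =>
          have h : (0:ℤ) - 2 * m'' = 1 - 1 := hm0
          have hm : m'' = 0 := by omega
          subst hm
          rw [sub_zero] at hc2
          refine hc2 (hFz ⟨.y l, hg⟩ τ 1 (Or.inl ?_))
          show (0:ℤ) < ((j:ℕ) : ℤ) - 1
          omega
        | z l =>
          have h : (0:ℤ) - 2 * m'' = 1 - 1 := hm0
          have hm : m'' = 0 := by omega
          subst hm
          rw [sub_zero] at hc2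
          by_cases hj2 : j = 2
          · refine hc2 (hVz ⟨.z l, hg⟩ τ 1 ?_ one_ne_zero)
            show ((j:ℕ) : ℤ) - 1 = 1
            omega
          · refine hc2 (hFz ⟨.z l, hg⟩ τ 1 (Or.inl ?_))
            show (1:ℤ) < ((j:ℕ) : ℤ) - 1
            omega
        | y' l =>
          have h : (0:ℤ) - 2 * m'' = 1 - 1 := hm0
          have hm : m'' = 0 := by omega
          subst hm
          rw [sub_zero] at hc2
          by_cases hlk : l = k
          · subst hlk; exact hne rfl
          · have ha1 : ((l:ℕ):ℤ) - 0 ≤ ((k:ℕ):ℤ) - 0 := (hF 0 χ 0 ⟨.y' l, hg⟩ hc1).1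
            have hlt : l < k := by omega
            exact hc2 (ih l hlt hg j hj)
      have hsum := sq χ 1 τ
      have hterm := (Finset.sum_eq_single_of_mem p₀ hmem side).symm.trans hsum
      have hterm2 : (d (gen n 0 χ)) p₀ * d (gen n 0 p₀.2) (1 - p₀.1, τ) = 0 := hterm
      rw [hc0, one_mul] at hterm2
      have hfin : d (gen n 0 (⟨Gen.y' k, hk⟩ : SGen n)) ((1:ℤ) - 0, τ) = 0 := hterm2
      simpa using hfin
  -- main argument
  intro σ m' σ' hm'
  by_contra hnz
  obtain ⟨g, hg⟩ := σ
  obtain ⟨g', hg'⟩ := σ'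
  have hmm : Gen.M g' - 2 * m' = Gen.M g - 1 := hMe ⟨g, hg⟩ ⟨g', hg'⟩ m' hnz
  have b1 := Mb g
  have b2 := Mb g'
  have hm1 : m' = 1 := by omega
  subst hm1
  cases g with
  | x k =>
    have h : Gen.M g' - 2 * 1 = 1 - 1 := hmm
    omega
  | x' k =>
    have h : Gen.M g' - 2 * 1 = 1 - 1 := hmm
    omega
  | y k =>
    cases g' with
    | x j =>
      exact hnz (hVz ⟨.y k, hg⟩ ⟨.x j, hg'⟩ 1 (by show (1:ℤ) - 1 = 0; norm_num) one_ne_zero)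
    | x' j =>
      refine hnz (hFz ⟨.y k, hg⟩ ⟨.x' j, hg'⟩ 1 (Or.inl ?_))
      show (0:ℤ) < ((j:ℕ) : ℤ) - 1
      have := hg'.1
      omega
    | y j => have h : (0:ℤ) - 2 * 1 = 0 - 1 := hmm; omega
    | y' j => have h : (0:ℤ) - 2 * 1 = 0 - 1 := hmm; omega
    | z j => have h : (0:ℤ) - 2 * 1 = 0 - 1 := hmm; omega
    | w j => have h : (-1:ℤ) - 2 * 1 = 0 - 1 := hmm; omega
  | y' k =>
    cases g' with
    | x j =>
      refine hnz (hFz ⟨.y' k, hg⟩ ⟨.x j, hg'⟩ 1 (Or.inr ?_))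
      show (0:ℤ) < ((j:ℕ) : ℤ) - 1
      have := hg'.1
      omega
    | x' j => exact hnz (keyC k hg j hg')
    | y j => have h : (0:ℤ) - 2 * 1 = 0 - 1 := hmm; omega
    | y' j => have h : (0:ℤ) - 2 * 1 = 0 - 1 := hmm; omega
    | z j => have h : (0:ℤ) - 2 * 1 = 0 - 1 := hmm; omega
    | w j => have h : (-1:ℤ) - 2 * 1 = 0 - 1 := hmm; omega
  | z k =>
    cases g' with
    | x j =>
      by_cases hj2 : j = 2
      · subst hj2
        exact hnz (keyB k hg hg')
      · refine hnz (hFz ⟨.z k, hg⟩ ⟨.x j, hg'⟩ 1 (Or.inr ?_))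
        show (1:ℤ) < ((j:ℕ) : ℤ) - 1
        have := hg'.1
        omega
    | x' j =>
      by_cases hj2 : j = 2
      · refine hnz (hVz ⟨.z k, hg⟩ ⟨.x' j, hg'⟩ 1 ?_ one_ne_zero)
        show ((j:ℕ) : ℤ) - 1 = 1
        omega
      · refine hnz (hFz ⟨.z k, hg⟩ ⟨.x' j, hg'⟩ 1 (Or.inl ?_))
        show (1:ℤ) < ((j:ℕ) : ℤ) - 1
        have := hg'.1
        omega
    | y j => have h : (0:ℤ) - 2 * 1 = 0 - 1 := hmm; omega
    | y' j => have h : (0:ℤ) - 2 * 1 = 0 - 1 := hmm; omega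
    | z j => have h : (0:ℤ) - 2 * 1 = 0 - 1 := hmm; omega
    | w j => have h : (-1:ℤ) - 2 * 1 = 0 - 1 := hmm; omega
  | w k =>
    cases g' with
    | x j => have h : (1:ℤ) - 2 * 1 = -1 - 1 := hmm; omega
    | x' j => have h : (1:ℤ) - 2 * 1 = -1 - 1 := hmm; omega
    | y j =>
      by_cases hj1 : j = 1
      · subst hj1
        exact hnz (keyA k hg hg')
      · refine hnz (hFz ⟨.w k, hg⟩ ⟨.y j, hg'⟩ 1 (Or.inr ?_))
        show (0:ℤ) < ((j:ℕ) : ℤ) - 1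
        have := hg'.1
        omega
    | y' j =>
      by_cases hj1 : j = 1
      · refine hnz (hVz ⟨.w k, hg⟩ ⟨.y' j, hg'⟩ 1 ?_ one_ne_zero)
        show ((j:ℕ) : ℤ) - 1 = 0
        omega
      · refine hnz (hFz ⟨.w k, hg⟩ ⟨.y' j, hg'⟩ 1 (Or.inl ?_))
        show (0:ℤ) < ((j:ℕ) : ℤ) - 1
        have := hg'.1
        omega
    | z j =>
      exact hnz (hVz ⟨.w k, hg⟩ ⟨.z j, hg'⟩ 1 (by show (1:ℤ) - 1 = 0; norm_num) one_ne_zero)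
    | w j => have h : (-1:ℤ) - 2 * 1 = -1 - 1 := hmm; omega
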